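/- Let Σ be a finite set equipped with the generalized Hamming metric (distinct points have distance 1). Let S ⊆ Σ be a set of size k, let x be the concatenation of the elements of S in some order (a string of length k), and let y be the string consisting of a single character a ∈ Σ repeated n times, where n ≥ k ≥ 1. If a ∈ S, then dtw(x, y) = k − 1, and if a ∉ S, then dtw(x, y) = n. -/

import Mathlib

/-- `xb` is an expansion of `x`: each letter of `x` is duplicated in place a positive
number of times. -/
def IsExpansion {α : Type*} (x xb : List α) : Prop :=
  ∃ ks : List ℕ, ks.length = x.length ∧ (∀ k ∈ ks, 0 < k) ∧
    xb = (List.zipWith (fun a k => List.replicate k a) x ks).flatten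

/-- `(xb, yb)` is a correspondence between `x` and `y`: a pair of equal-length expansions. -/
def IsCorrespondence {α : Type*} (x y xb yb : List α) : Prop :=
  IsExpansion x xb ∧ IsExpansion y yb ∧ xb.length = yb.length

/-- The cost of a correspondence: summed distances of aligned letters. -/
noncomputable def corrCost {α : Type*} (δ : α → α → ℝ) (xb yb : List α) : ℝ :=
  (List.zipWith δ xb yb).sum

/-- Dynamic time warping distance with respect to a distance function `δ`. -/
noncomputable def dtw {α : Type*} (δ : α → α → ℝ) (x y : List α) : ℝ :=
  sInf {c | ∃ xb yb, IsCorrespondence x y xb yb ∧ c = corrCost δ xb yb}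

/-- Generalized Hamming distance on letters. -/
noncomputable def hamDist {α : Type*} [DecidableEq α] (a b : α) : ℝ := if a = b then 0 else 1

/-- DTW over generalized Hamming space. -/
noncomputable def dtw0 {α : Type*} [DecidableEq α] (x y : List α) : ℝ := dtw hamDist x y


lemma flatten_map_replicate {α : Type*} (ks : List ℕ) (a : α) :
    (ks.map (fun k => List.replicate k a)).flatten = List.replicate ks.sum a := by
  induction ks with
  | nil => simp
  | cons k t ih => rw [List.map_cons, List.flatten_cons, ih, List.sum_cons, List.replicate_add]

lemma zipWith_replicate_left {α : Type*} (a : α) :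
    ∀ (ks : List ℕ) (n : ℕ), ks.length = n →
      List.zipWith (fun a k => List.replicate k a) (List.replicate n a) ks
        = ks.map (fun k => List.replicate k a) := by
  intro ks
  induction ks with
  | nil => intro n h; simp
  | cons k t ih =>
    intro n h
    cases n with
    | zero => simp at h
    | succ m => simp [List.replicate_succ, ih m (by simpa using h)]

lemma length_le_sum (ks : List ℕ) (h : ∀ k ∈ ks, 0 < k) : ks.length ≤ ks.sum := by
  induction ks with
  | nil => simp
  | cons k t ih =>
    simp only [List.length_cons, List.sum_cons]
    have h1 := h k (by simp)
    have h2 := ih (fun k hk => h k (by simp [hk]))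
    omega

lemma expansion_replicate {α : Type*} {n : ℕ} {a : α} {yb : List α}
    (h : IsExpansion (List.replicate n a) yb) : ∃ m, n ≤ m ∧ yb = List.replicate m a := by
  obtain ⟨ks, hlen, hpos, hyb⟩ := h
  refine ⟨ks.sum, ?_, ?_⟩
  · calc n = ks.length := by simpa using hlen.symm
    _ ≤ ks.sum := length_le_sum ks hpos
  · rw [hyb, zipWith_replicate_left a ks n (by simpa using hlen), flatten_map_replicate]

lemma mem_expansion {α : Type*} {x xb : List α} (h : IsExpansion x xb) (b : α) :
    b ∈ xb ↔ b ∈ x := by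
  obtain ⟨ks, hlen, hpos, hxb⟩ := h
  subst hxb
  induction x generalizing ks with
  | nil => cases ks <;> simp_all
  | cons c t ih =>
    cases ks with
    | nil => simp at hlen
    | cons k kt =>
      have hk : k ≠ 0 := (hpos k (by simp)).ne'
      simp only [List.zipWith_cons_cons, List.flatten_cons, List.mem_append,
        List.mem_replicate, List.mem_cons]
      rw [ih kt (by simpa using hlen) (fun j hj => hpos j (List.mem_cons_of_mem _ hj))]
      constructor
      · rintro (⟨-, rfl⟩ | h) <;> tauto
      · rintro (rfl | h)
        · exact Or.inl ⟨hk, rfl⟩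
        · tauto

lemma cost_replicate {α : Type*} [DecidableEq α] (xb : List α) (a : α) :
    corrCost hamDist xb (List.replicate xb.length a)
      = (xb.countP (fun b => b ≠ a) : ℝ) := by
  induction xb with
  | nil => simp [corrCost]
  | cons b t ih =>
    simp only [List.length_cons, List.replicate_succ, List.zipWith_cons_cons, corrCost,
      List.sum_cons, List.countP_cons] at *
    rw [ih]
    by_cases hb : b = a <;> simp [hamDist, hb] <;> push_cast <;> ring

lemma flatten_zipWith_one {α : Type*} (u : List α) :
    (List.zipWith (fun a k => List.replicate k a) u (List.replicate u.length 1)).flatten = u := by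
  induction u with
  | nil => simp
  | cons c t ih => simp [List.replicate_succ, ih]

lemma isExpansion_mid {α : Type*} (u v : List α) (c : α) {r : ℕ} (hr : 0 < r) :
    IsExpansion (u ++ c :: v) (u ++ List.replicate r c ++ v) := by
  refine ⟨List.replicate u.length 1 ++ r :: List.replicate v.length 1, by simp, ?_, ?_⟩
  · intro k hk
    simp only [List.mem_append, List.mem_cons, List.mem_replicate] at hk
    rcases hk with ⟨-, rfl⟩ | rfl | ⟨-, rfl⟩ <;> omega
  · rw [List.zipWith_append (by simp)]
    simp [flatten_zipWith_one, List.append_assoc]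

lemma isExpansion_refl {α : Type*} (x : List α) : IsExpansion x x :=
  ⟨List.replicate x.length 1, by simp, by simp, (flatten_zipWith_one x).symm⟩

/-- DTW over generalized Hamming space between the concatenation of a k-element set S
and the n-fold repetition of a character a equals k−1 if a ∈ S and n if a ∉ S. -/
theorem dtw0_set_vs_repeat {σ : Type*} [DecidableEq σ] (S : Finset σ) (k n : ℕ)
    (hk : 1 ≤ k) (hkn : k ≤ n) (hS : S.card = k)
    (x : List σ) (hnd : x.Nodup) (hxS : x.toFinset = S) (a : σ) :
    (a ∈ S → dtw0 x (List.replicate n a) = (k : ℝ) - 1) ∧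
      (a ∉ S → dtw0 x (List.replicate n a) = (n : ℝ)) := by
  have hxlen : x.length = k := by
    rw [← hS, ← hxS, List.toFinset_card_of_nodup hnd]
  have hrpos : 0 < n - k + 1 := by omega
  set r := n - k + 1 with hrdef
  constructor
  · -- a ∈ S
    intro ha
    have hax : a ∈ x := by rw [← List.mem_toFinset, hxS]; exact ha
    obtain ⟨u, v, hx⟩ := List.append_of_mem hax
    subst hx
    have hnd' := hnd
    rw [List.nodup_append] at hnd'
    obtain ⟨hu, hav, hdisj⟩ := hnd'
    have hau : a ∉ u := fun h => hdisj a h a (by simp) rfl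
    have hav' : a ∉ v := by rw [List.nodup_cons] at hav; exact hav.1
    have hulen : u.length + v.length + 1 = k := by
      simpa [Nat.add_assoc, Nat.add_comm, Nat.add_left_comm] using hxlen
    set xb := u ++ List.replicate r a ++ v with hxb
    have hxblen : xb.length = n := by
      simp only [hxb, List.length_append, List.length_replicate]
      omega
    have hmem : ((k:ℝ) - 1) ∈ {c | ∃ xb yb,
        IsCorrespondence (u ++ a :: v) (List.replicate n a) xb yb ∧
          c = corrCost hamDist xb yb} := by
      refine ⟨xb, List.replicate n a,
        ⟨isExpansion_mid u v a hrpos, isExpansion_refl _, by simp [hxblen]⟩, ?_⟩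
      rw [← hxblen, cost_replicate]
      have h1 : u.countP (fun b => b ≠ a) = u.length :=
        List.countP_eq_length.mpr (fun b hb => by
          simpa using fun h : b = a => hau (h ▸ hb))
      have h2 : (List.replicate r a).countP (fun b => b ≠ a) = 0 :=
        List.countP_eq_zero.mpr (fun b hb => by
          simp [List.eq_of_mem_replicate hb])
      have h3 : v.countP (fun b => b ≠ a) = v.length :=
        List.countP_eq_length.mpr (fun b hb => by
          simpa using fun h : b = a => hav' (h ▸ hb))
      rw [hxb, List.countP_append, List.countP_append, h1, h2, h3]
      rw [← hulen]
      push_cast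
      ring
    have hlb : ∀ c ∈ {c | ∃ xb yb,
        IsCorrespondence (u ++ a :: v) (List.replicate n a) xb yb ∧
          c = corrCost hamDist xb yb}, (k:ℝ) - 1 ≤ c := by
      rintro c ⟨xb', yb', ⟨hex, hey, hlen⟩, rfl⟩
      obtain ⟨m, hm, rfl⟩ := expansion_replicate hey
      have hxb'len : xb'.length = m := by simpa using hlen
      rw [← hxb'len, cost_replicate]
      have hsub : S.erase a ⊆ (xb'.filter (fun b => b ≠ a)).toFinset := by
        intro b hb
        rw [Finset.mem_erase] at hb
        rw [List.mem_toFinset, List.mem_filter]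
        refine ⟨(mem_expansion hex b).mpr ?_, by simp [hb.1]⟩
        rw [← List.mem_toFinset, hxS]
        exact hb.2
      have h1 : k - 1 ≤ xb'.countP (fun b => b ≠ a) := by
        rw [List.countP_eq_length_filter]
        calc k - 1 = (S.erase a).card := by rw [Finset.card_erase_of_mem ha, hS]
        _ ≤ ((xb'.filter (fun b => b ≠ a)).toFinset).card := Finset.card_le_card hsub
        _ ≤ _ := List.toFinset_card_le _
      have h2 : ((k - 1 : ℕ) : ℝ) ≤ (xb'.countP (fun b => b ≠ a) : ℝ) := Nat.cast_le.mpr h1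
      rwa [Nat.cast_sub hk, Nat.cast_one] at h2
    exact le_antisymm (csInf_le ⟨(k:ℝ) - 1, hlb⟩ hmem) (le_csInf ⟨_, hmem⟩ hlb)
  · -- a ∉ S
    intro ha
    have hax : a ∉ x := by rw [← List.mem_toFinset, hxS] at *; exact ha
    cases x with
    | nil => simp at hxlen; omega
    | cons c t =>
      have htlen : t.length + 1 = k := by simpa using hxlen
      set xb := List.replicate r c ++ t with hxb
      have hexp : IsExpansion (c :: t) xb := by
        simpa using isExpansion_mid [] t c hrpos
      have hxblen : xb.length = n := by
        simp only [hxb, List.length_append, List.length_replicate]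
        omega
      have hcount : ∀ (l : List σ), (∀ b ∈ l, b ∈ c :: t) →
          l.countP (fun b => b ≠ a) = l.length := by
        intro l hl
        refine List.countP_eq_length.mpr (fun b hb => ?_)
        simpa using fun h : b = a => hax (h ▸ hl b hb)
      have hmem : ((n:ℝ)) ∈ {c' | ∃ xb yb,
          IsCorrespondence (c :: t) (List.replicate n a) xb yb ∧
            c' = corrCost hamDist xb yb} := by
        refine ⟨xb, List.replicate n a, ⟨hexp, isExpansion_refl _, by simp [hxblen]⟩, ?_⟩
        rw [← hxblen, cost_replicate,
          hcount xb (fun b hb => (mem_expansion hexp b).mp hb), hxblen]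
      have hlb : ∀ c' ∈ {c' | ∃ xb yb,
          IsCorrespondence (c :: t) (List.replicate n a) xb yb ∧
            c' = corrCost hamDist xb yb}, (n:ℝ) ≤ c' := by
        rintro c' ⟨xb', yb', ⟨hex, hey, hlen⟩, rfl⟩
        obtain ⟨m, hm, rfl⟩ := expansion_replicate hey
        have hxb'len : xb'.length = m := by simpa using hlen
        rw [← hxb'len, cost_replicate,
          hcount xb' (fun b hb => (mem_expansion hex b).mp hb)]
        exact_mod_cast hm.trans hxb'len.ge
      exact le_antisymm (csInf_le ⟨(n:ℝ), hlb⟩ hmem) (le_csInf ⟨_, hmem⟩ hlb)
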